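/- Let H be an infinite-dimensional complex Hilbert space. For every k ≥ 1, the variant geometric mean G'ₖ, defined recursively by G'₁(A) = A and G'_{k+1}(A₁,…,A_{k+1}) = A_{k+1}^{1/2} G'ₖ((A_{k+1}^{−1/2}A₁A_{k+1}^{−1/2})^{k/(k+1)}, …, (A_{k+1}^{−1/2}AₖA_{k+1}^{−1/2})^{k/(k+1)}) A_{k+1}^{1/2}, is concave: for all k-tuples (A₁,…,Aₖ) and (B₁,…,Bₖ) of positive definite invertible bounded operators on H and all λ ∈ [0,1], G'ₖ(λA₁+(1−λ)B₁, …, λAₖ+(1−λ)Bₖ) ≥ λ G'ₖ(A₁,…,Aₖ) + (1−λ) G'ₖ(B₁,…,Bₖ) in the Loewner order. -/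

import Mathlib

set_option synthInstance.maxHeartbeats 400000
set_option maxHeartbeats 1000000
set_option linter.unusedSectionVars false

noncomputable section

variable {H : Type*} [NormedAddCommGroup H] [InnerProductSpace ℂ H] [CompleteSpace H]

/-- `a` is a positive definite invertible bounded operator. -/
def IsPosDefInv (a : H →L[ℂ] H) : Prop := 0 ≤ a ∧ IsUnit a

/-- The variant geometric mean: `varGM k` is the mean `G'_{k+1}` of `k+1` operator
variables, defined recursively by `G'₁(A) = A` and
`G'_{k+1}(A₁,…,A_{k+1}) = A_{k+1}^{1/2} G'ₖ((A_{k+1}^{-1/2}A₁A_{k+1}^{-1/2})^{k/(k+1)},…,(A_{k+1}^{-1/2}AₖA_{k+1}^{-1/2})^{k/(k+1)}) A_{k+1}^{1/2}`,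
with fractional powers taken via the continuous functional calculus. -/
noncomputable def varGM : (k : ℕ) → (Fin (k + 1) → (H →L[ℂ] H)) → (H →L[ℂ] H)
  | 0, A => A 0
  | (k + 1), A =>
      CFC.sqrt (A (Fin.last (k + 1))) *
        varGM k (fun i : Fin (k + 1) =>
          CFC.rpow
            (CFC.sqrt (Ring.inverse (A (Fin.last (k + 1)))) * A i.castSucc *
              CFC.sqrt (Ring.inverse (A (Fin.last (k + 1)))))
            ((k + 1 : ℝ) / (k + 2))) *
        CFC.sqrt (A (Fin.last (k + 1)))

end

noncomputable section

open scoped NNReal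

namespace VarGMAux

variable {A : Type*} [CStarAlgebra A] [PartialOrder A] [StarOrderedRing A]


variable {A : Type*} [CStarAlgebra A] [PartialOrder A] [StarOrderedRing A]

/-- positive invertible element -/
def PosU (a : A) : Prop := 0 ≤ a ∧ IsUnit a

namespace PosU

theorem nonneg {a : A} (h : PosU a) : 0 ≤ a := h.1
theorem isUnit {a : A} (h : PosU a) : IsUnit a := h.2
theorem sa {a : A} (h : PosU a) : IsSelfAdjoint a := .of_nonneg h.1

theorem zero_not_mem {a : A} (h : PosU a) : 0 ∉ spectrum ℝ≥0 a :=
  (spectrum.zero_notMem_iff ℝ≥0).mpr h.2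

protected theorem rpow {a : A} (h : PosU a) (y : ℝ) : PosU (CFC.rpow a y) := by
  refine ⟨CFC.rpow_nonneg, ?_⟩
  exact ⟨⟨CFC.rpow a y, CFC.rpow a (-y),
    CFC.rpow_mul_rpow_neg y (show IsStrictlyPositive a from h),
    CFC.rpow_neg_mul_rpow y (show IsStrictlyPositive a from h)⟩, rfl⟩

protected theorem sqrt {a : A} (h : PosU a) : PosU (CFC.sqrt a) := by
  rw [CFC.sqrt_eq_rpow]
  exact h.rpow _

protected theorem inverse {a : A} (h : PosU a) : PosU (Ring.inverse a) := by
  obtain ⟨u, rfl⟩ := h.2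
  rw [Ring.inverse_unit]
  exact ⟨by rw [← CFC.rpow_neg_one_eq_inv u h.1]; exact CFC.rpow_nonneg, u⁻¹.isUnit⟩

protected theorem conj {x t : A} (hx : PosU x) (ht : IsUnit t) :
    PosU (star t * x * t) :=
  ⟨star_left_conjugate_nonneg hx.1 t, ((ht.star.mul hx.2).mul ht)⟩

protected theorem add_nonneg {x y : A} (hx : PosU x) (hy : 0 ≤ y) : PosU (x + y) :=
  ⟨_root_.add_nonneg hx.1 hy, CStarAlgebra.isUnit_of_le x (le_add_of_nonneg_right hy) (show IsStrictlyPositive x from hx)⟩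

protected theorem sum {n : ℕ} {f : Fin (n + 1) → A} (hf : ∀ i, PosU (f i)) :
    PosU (∑ i, f i) := by
  rw [Fin.sum_univ_succ]
  exact (hf 0).add_nonneg (Finset.sum_nonneg fun i _ => (hf i.succ).1)

end PosU

theorem rpow_add' {a : A} (h : PosU a) (x y : ℝ) :
    CFC.rpow a x * CFC.rpow a y = CFC.rpow a (x + y) :=
  (CFC.rpow_add h.2).symm

/-- `sqrt (a ^ y) = a ^ (y / 2)` without nonvanishing hypotheses on `y`. -/
theorem sqrt_rpow'' {a : A} (h : PosU a) (y : ℝ) :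
    CFC.sqrt (CFC.rpow a y) = CFC.rpow a (y / 2) := by
  refine CFC.sqrt_unique ?_ CFC.rpow_nonneg
  rw [rpow_add' h]
  norm_num

theorem inverse_rpow {a : A} (h : PosU a) (y : ℝ) :
    Ring.inverse (CFC.rpow a y) = CFC.rpow a (-y) := by
  have h1 : CFC.rpow a y * CFC.rpow a (-y) = 1 := CFC.rpow_mul_rpow_neg y (show IsStrictlyPositive a from h)
  calc Ring.inverse (CFC.rpow a y)
      = Ring.inverse (CFC.rpow a y) * (CFC.rpow a y * CFC.rpow a (-y)) := by rw [h1, mul_one]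
    _ = Ring.inverse (CFC.rpow a y) * CFC.rpow a y * CFC.rpow a (-y) := by rw [mul_assoc]
    _ = CFC.rpow a (-y) := by rw [Ring.inverse_mul_cancel _ (h.rpow y).2, one_mul]

theorem sqrt_inverse {a : A} (h : PosU a) :
    CFC.sqrt (Ring.inverse a) = Ring.inverse (CFC.sqrt a) := by
  refine CFC.sqrt_unique ?_ h.sqrt.inverse.1
  have h1 : CFC.sqrt a * CFC.sqrt a = a := CFC.sqrt_mul_sqrt_self a h.1
  rw [← Ring.mul_inverse_rev' (Commute.refl _), h1]

theorem sqrt_mul_sqrt_inverse {a : A} (h : PosU a) :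
    CFC.sqrt a * CFC.sqrt (Ring.inverse a) = 1 := by
  rw [sqrt_inverse h, Ring.mul_inverse_cancel _ h.sqrt.2]

theorem sqrt_inverse_mul_sqrt {a : A} (h : PosU a) :
    CFC.sqrt (Ring.inverse a) * CFC.sqrt a = 1 := by
  rw [sqrt_inverse h, Ring.inverse_mul_cancel _ h.sqrt.2]


theorem posu_rpow {a : A} (h : PosU a) (y : ℝ) : PosU (CFC.rpow a y) := h.rpow y
theorem posu_sqrt {a : A} (h : PosU a) : PosU (CFC.sqrt a) := h.sqrt
theorem posu_inverse {a : A} (h : PosU a) : PosU (Ring.inverse a) := h.inverse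
theorem posu_conj {x t : A} (hx : PosU x) (ht : IsUnit t) : PosU (star t * x * t) :=
  hx.conj ht
theorem posu_sum {n : ℕ} {f : Fin (n + 1) → A} (hf : ∀ i, PosU (f i)) :
    PosU (∑ i, f i) := PosU.sum hf


theorem rpow_zero' {a : A} (h : PosU a) : CFC.rpow a 0 = 1 := CFC.rpow_zero a h.1

theorem rpow_rpow' {a : A} (h : PosU a) (x y : ℝ) (hx : x ≠ 0) :
    CFC.rpow (CFC.rpow a x) y = CFC.rpow a (x * y) :=
  CFC.rpow_rpow a x y hx (show IsStrictlyPositive a from h)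

theorem rpow_sa {a : A} (y : ℝ) : IsSelfAdjoint (CFC.rpow a y) :=
  .of_nonneg CFC.rpow_nonneg

/-- Loewner–Heinz for the square root. -/
theorem sqrt_mono [Nontrivial A] {a b : A} (ha : 0 ≤ a) (hb : PosU b) (hab : a ≤ b) :
    CFC.sqrt a ≤ CFC.sqrt b := by
  have hb2 : PosU (CFC.rpow b (2⁻¹ : ℝ)) := posu_rpow hb _
  -- the hypothesis, in norm form
  have hz : ‖CFC.sqrt a * CFC.rpow b (-(1/2) : ℝ)‖ ≤ 1 :=
    (le_iff_norm_sqrt_mul_rpow a b ha (show IsStrictlyPositive b from hb)).mp hab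
  -- reduce the goal to a norm bound
  rw [show CFC.sqrt b = CFC.rpow b (2⁻¹ : ℝ) by
        rw [CFC.sqrt_eq_rpow]; norm_num,
    le_iff_norm_sqrt_mul_rpow _ _ (CFC.sqrt_nonneg _)
      (show IsStrictlyPositive (CFC.rpow b (2⁻¹ : ℝ)) from hb2)]
  -- names
  set w : A := CFC.rpow (CFC.rpow b (2⁻¹ : ℝ)) (-(1/2) : ℝ) with hw
  have hww : w = CFC.rpow b (-(4⁻¹) : ℝ) := by
    rw [hw, rpow_rpow' hb _ _ (by norm_num)]
    norm_num
  set x : A := CFC.sqrt (CFC.sqrt a) * w with hx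
  -- compute star x * x
  have hsx : star x = w * CFC.sqrt (CFC.sqrt a) := by
    rw [hx, star_mul, (IsSelfAdjoint.of_nonneg CFC.rpow_nonneg : IsSelfAdjoint w),
      (IsSelfAdjoint.of_nonneg (CFC.sqrt_nonneg _) : IsSelfAdjoint (CFC.sqrt (CFC.sqrt a)))]
  have hd : star x * x = w * CFC.sqrt a * w := by
    rw [hsx, hx]
    have harr : (w * CFC.sqrt (CFC.sqrt a)) * (CFC.sqrt (CFC.sqrt a) * w)
        = w * (CFC.sqrt (CFC.sqrt a) * CFC.sqrt (CFC.sqrt a)) * w := by noncomm_ring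
    rw [harr, CFC.sqrt_mul_sqrt_self (CFC.sqrt a) (CFC.sqrt_nonneg _)]
  set d : A := w * CFC.sqrt a * w with hdd
  have hd0 : 0 ≤ d := conjugate_nonneg_of_nonneg (CFC.sqrt_nonneg _) CFC.rpow_nonneg
  -- conjugation unit
  have h14 : CFC.rpow b (-(4⁻¹) : ℝ) * CFC.rpow b (4⁻¹ : ℝ) = 1 := by
    rw [rpow_add' hb]; norm_num; exact rpow_zero' hb
  have h41 : CFC.rpow b (4⁻¹ : ℝ) * CFC.rpow b (-(4⁻¹) : ℝ) = 1 := by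
    rw [rpow_add' hb]; norm_num; exact rpow_zero' hb
  set wu : Aˣ := ⟨CFC.rpow b (-(4⁻¹) : ℝ), CFC.rpow b (4⁻¹ : ℝ), h14, h41⟩ with hwu
  set y : A := CFC.sqrt a * CFC.rpow b (-(1/2) : ℝ) with hy
  have hconj : d = ↑wu * y * ↑wu⁻¹ := by
    have : (↑wu⁻¹ : A) = CFC.rpow b (4⁻¹ : ℝ) := rfl
    rw [this, hdd, hww, hy]
    have : CFC.rpow b (-(1/2) : ℝ) = CFC.rpow b (-(4⁻¹) : ℝ) * CFC.rpow b (-(4⁻¹) : ℝ) := by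
      rw [rpow_add' hb]; norm_num
    rw [this]
    show CFC.rpow b (-(4⁻¹) : ℝ) * CFC.sqrt a * CFC.rpow b (-(4⁻¹) : ℝ) = _
    simp only [mul_assoc, h14, mul_one]
    rfl
  -- spectrum bound
  have hspec : spectrum ℝ d = spectrum ℝ y := by rw [hconj, spectrum.units_conjugate]
  have hd1 : d ≤ 1 := by
    rw [CFC.le_one_iff (R := ℝ) d (IsSelfAdjoint.of_nonneg hd0)]
    intro t ht
    rw [hspec] at ht
    calc t ≤ |t| := le_abs_self t
    _ ≤ ‖y‖ := spectrum.norm_le_norm_of_mem ht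
    _ ≤ 1 := hz
  have hnd : ‖star x * x‖ ≤ 1 := by
    rw [hd]
    exact (CStarAlgebra.norm_le_one_iff_of_nonneg d hd0).mpr hd1
  have hxn : ‖x‖ ≤ 1 := by
    rw [← sq_le_one_iff₀ (norm_nonneg x), sq, ← CStarRing.norm_star_mul_self]
    exact hnd
  exact hxn

end VarGMAux

namespace VarGMAux2
variable {A : Type*} [CStarAlgebra A] [PartialOrder A] [StarOrderedRing A]
open VarGMAux

/-- The geometric mean of `a` and `b`. -/
def gm (a b : A) : A :=
  CFC.sqrt b * CFC.sqrt (CFC.sqrt (Ring.inverse b) * a * CFC.sqrt (Ring.inverse b)) * CFC.sqrt b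

theorem gm_nonneg (a b : A) : 0 ≤ gm a b :=
  conjugate_nonneg_of_nonneg (CFC.sqrt_nonneg _) (CFC.sqrt_nonneg _)

theorem gm_sa (a b : A) : IsSelfAdjoint (gm a b) := .of_nonneg (gm_nonneg a b)

theorem gm_riccati {a b : A} (ha : 0 ≤ a) (hb : PosU b) :
    gm a b * Ring.inverse b * gm a b = a := by
  set s := CFC.sqrt b with hs
  set si := CFC.sqrt (Ring.inverse b) with hsi
  have hss : s * si = 1 := sqrt_mul_sqrt_inverse hb
  have hsis : si * s = 1 := sqrt_inverse_mul_sqrt hb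
  set c := CFC.sqrt (si * a * si) with hc
  have hcc : c * c = si * a * si :=
    CFC.sqrt_mul_sqrt_self _ (conjugate_nonneg_of_nonneg ha (CFC.sqrt_nonneg _))
  have hbi : Ring.inverse b = si * si :=
    (CFC.sqrt_mul_sqrt_self _ (posu_inverse hb).1).symm
  show (s * c * s) * Ring.inverse b * (s * c * s) = a
  rw [hbi]
  have e1 : (s * c * s) * (si * si) * (s * c * s)
      = s * (c * (((s * si) * (si * s)) * (c * s))) := by noncomm_ring
  rw [e1, hss, hsis, one_mul, one_mul]
  have e2 : s * (c * (c * s)) = s * (c * c) * s := by noncomm_ring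
  rw [e2, hcc]
  have e3 : s * (si * a * si) * s = (s * si) * (a * (si * s)) := by noncomm_ring
  rw [e3, hss, hsis, one_mul, mul_one]

/-- block-positivity predicate for `[[a, x],[x, b]]`, expressed algebraically. -/
def Qprop (a b x : A) : Prop :=
  ∀ c d : A, 0 ≤ star c * a * c + star c * x * d + star d * x * c + star d * b * d

theorem qprop_gm {a b : A} (ha : 0 ≤ a) (hb : PosU b) : Qprop a b (gm a b) := by
  intro c d
  set s := CFC.sqrt b with hs
  set si := CFC.sqrt (Ring.inverse b) with hsi
  have hss : s * si = 1 := sqrt_mul_sqrt_inverse hb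
  have hsis : si * s = 1 := sqrt_inverse_mul_sqrt hb
  have hsisa : IsSelfAdjoint si := .of_nonneg (CFC.sqrt_nonneg _)
  have hssa : IsSelfAdjoint s := .of_nonneg (CFC.sqrt_nonneg _)
  set G := gm a b with hG
  have hGsa : IsSelfAdjoint G := gm_sa a b
  have hRic : G * (si * si) * G = a := by
    rw [CFC.sqrt_mul_sqrt_self _ (posu_inverse hb).1]
    exact gm_riccati ha hb
  have hP := star_mul_self_nonneg (si * G * c + s * d)
  have hexp : star (si * G * c + s * d) * (si * G * c + s * d)
      = star c * a * c + star c * G * d + star d * G * c + star d * b * d := by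
    have hstar : star (si * G * c + s * d) = star c * (G * si) + star d * s := by
      simp only [star_add, star_mul, hsisa.star_eq, hssa.star_eq, hGsa.star_eq]
      try noncomm_ring
    rw [hstar]
    have hb2 : s * s = b := CFC.sqrt_mul_sqrt_self b hb.1
    have expand : (star c * (G * si) + star d * s) * (si * G * c + s * d)
        = star c * (G * (si * si) * G) * c + star c * (G * (si * s)) * d
          + star d * ((s * si) * G) * c + star d * (s * s) * d := by noncomm_ring
    rw [expand, hRic, hss, hsis, mul_one, one_mul, hb2]
  rw [hexp] at hP
  exact hP

theorem Qprop.mono {a b x a' b' : A} (h : Qprop a b x) (ha : a ≤ a') (hb : b ≤ b') :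
    Qprop a' b' x := by
  intro c d
  calc (0 : A) ≤ star c * a * c + star c * x * d + star d * x * c + star d * b * d := h c d
  _ ≤ star c * a' * c + star c * x * d + star d * x * c + star d * b' * d := by
      exact add_le_add (add_le_add (add_le_add (star_left_conjugate_le_conjugate ha c) le_rfl) le_rfl)
        (star_left_conjugate_le_conjugate hb d)

theorem Qprop.le_gm [Nontrivial A] {a b x : A} (h : Qprop a b x) (hx : 0 ≤ x)
    (ha : PosU a) (hb : PosU b) : x ≤ gm a b := by
  have hxsa : IsSelfAdjoint x := .of_nonneg hx
  set bi := Ring.inverse b with hbi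
  have hbisa : IsSelfAdjoint bi := (posu_inverse hb).1 |> IsSelfAdjoint.of_nonneg
  -- step 1 : x * bi * x ≤ a
  have h1 : x * bi * x ≤ a := by
    have := h 1 (-(bi * x))
    simp only [star_one, one_mul, mul_one, star_neg, star_mul, hxsa.star_eq,
      hbisa.star_eq, mul_neg, neg_mul] at this
    have hbib : bi * b = 1 := Ring.inverse_mul_cancel _ hb.2
    have e : a + -(x * (bi * x)) + -(x * bi * x) + - -(x * bi * b * (bi * x))
        = a - x * bi * x + (x * ((bi * b) - 1) * (bi * x)) := by noncomm_ring
    rw [e, hbib, sub_self] at this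
    simp only [mul_zero, zero_mul, add_zero] at this
    exact sub_nonneg.mp this
  -- step 2 : conjugate by sqrt (b⁻¹)
  set si := CFC.sqrt bi with hsi
  set s := CFC.sqrt b with hs
  have hsiP : PosU si := posu_sqrt (posu_inverse hb)
  have hsisa : IsSelfAdjoint si := .of_nonneg hsiP.1
  have hssa : IsSelfAdjoint s := .of_nonneg (CFC.sqrt_nonneg _)
  have hss : s * si = 1 := sqrt_mul_sqrt_inverse hb
  have hsis : si * s = 1 := sqrt_inverse_mul_sqrt hb
  set y := si * x * si with hy
  have hy0 : 0 ≤ y := conjugate_nonneg_of_nonneg hx hsiP.1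
  have h2 : si * (x * bi * x) * si ≤ si * a * si := by
    have := star_left_conjugate_le_conjugate h1 si
    rwa [hsisa.star_eq] at this
  have hyy : y * y = si * (x * bi * x) * si := by
    have hsisi : si * si = bi := CFC.sqrt_mul_sqrt_self bi (posu_inverse hb).1
    rw [hy, ← hsisi]
    noncomm_ring
  have hd2 : PosU (si * a * si) := by
    have := posu_conj ha hsiP.2
    rwa [hsisa.star_eq] at this
  have hyy0 : 0 ≤ y * y := by
    have := star_mul_self_nonneg y
    rwa [(IsSelfAdjoint.of_nonneg hy0).star_eq] at this
  have h3 : y ≤ CFC.sqrt (si * a * si) := by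
    have hmono := sqrt_mono hyy0 hd2 ((le_of_eq hyy).trans h2)
    rwa [CFC.sqrt_mul_self y hy0] at hmono
  -- step 3 : conjugate back by sqrt b
  have h4 := star_left_conjugate_le_conjugate h3 s
  rw [hssa.star_eq] at h4
  have e1 : s * y * s = (s * si) * x * (si * s) := by rw [hy]; noncomm_ring
  rw [e1, hss, hsis, one_mul, mul_one] at h4
  exact h4

theorem gm_mono [Nontrivial A] {a b a' b' : A} (ha : 0 ≤ a) (hb : PosU b)
    (ha' : PosU a') (hb' : PosU b') (h1 : a ≤ a') (h2 : b ≤ b') :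
    gm a b ≤ gm a' b' :=
  Qprop.le_gm ((qprop_gm ha hb).mono h1 h2) (gm_nonneg a b) ha' hb'

theorem gm_jensen [Nontrivial A] {n : ℕ} (T : Fin (n + 1) → A) (hT : ∀ i, IsUnit (T i))
    (X Y : Fin (n + 1) → A) (hX : ∀ i, PosU (X i)) (hY : ∀ i, PosU (Y i)) :
    ∑ i, star (T i) * gm (X i) (Y i) * T i
      ≤ gm (∑ i, star (T i) * X i * T i) (∑ i, star (T i) * Y i * T i) := by
  refine Qprop.le_gm ?_ ?_ (posu_sum fun i => posu_conj (hX i) (hT i))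
    (posu_sum fun i => posu_conj (hY i) (hT i))
  · intro c d
    have key : ∀ i : Fin (n + 1), 0 ≤ star (T i * c) * X i * (T i * c)
        + star (T i * c) * gm (X i) (Y i) * (T i * d)
        + star (T i * d) * gm (X i) (Y i) * (T i * c)
        + star (T i * d) * Y i * (T i * d) :=
      fun i => qprop_gm (hX i).1 (hY i) (T i * c) (T i * d)
    have e : ∀ i : Fin (n+1), star (T i * c) * X i * (T i * c)
        + star (T i * c) * gm (X i) (Y i) * (T i * d)
        + star (T i * d) * gm (X i) (Y i) * (T i * c)
        + star (T i * d) * Y i * (T i * d)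
        = star c * (star (T i) * X i * T i) * c
        + star c * (star (T i) * gm (X i) (Y i) * T i) * d
        + star d * (star (T i) * gm (X i) (Y i) * T i) * c
        + star d * (star (T i) * Y i * T i) * d := by
      intro i
      simp only [star_mul]
      noncomm_ring
    simp only [Finset.mul_sum, Finset.sum_mul, ← Finset.sum_add_distrib]
    exact Finset.sum_nonneg fun i _ => le_of_le_of_eq (key i) (e i)
  · exact Finset.sum_nonneg fun i _ => star_left_conjugate_nonneg (gm_nonneg _ _) _

end VarGMAux2

section RealAux

open Set in
theorem rpow_lipschitz_aux {r M x s t : ℝ} (hr : 0 < r) (hx : x ∈ Set.Icc r M)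
    (hs : s ∈ Set.Icc (0:ℝ) 1) (ht : t ∈ Set.Icc (0:ℝ) 1) :
    |x ^ s - x ^ t| ≤ (max 1 M * (|Real.log r| + |Real.log M|)) * |s - t| := by
  have hx0 : 0 < x := lt_of_lt_of_le hr hx.1
  set L := |Real.log r| + |Real.log M| with hL
  have hlog : |Real.log x| ≤ L := by
    have h1 : Real.log x ≤ Real.log M := Real.log_le_log hx0 hx.2
    have h2 : Real.log r ≤ Real.log x := Real.log_le_log hr hx.1
    rw [abs_le]
    constructor
    · have := neg_abs_le (Real.log r)
      linarith [abs_nonneg (Real.log M)]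
    · have := le_abs_self (Real.log M)
      linarith [abs_nonneg (Real.log r)]
  have hpow : ∀ u ∈ Set.Icc (0:ℝ) 1, x ^ u ≤ max 1 M := by
    intro u hu
    rcases le_total x 1 with hx1 | hx1
    · exact le_trans (Real.rpow_le_one hx0.le hx1 hu.1) (le_max_left _ _)
    · calc x ^ u ≤ x ^ (1:ℝ) := Real.rpow_le_rpow_of_exponent_le hx1 hu.2
      _ = x := Real.rpow_one x
      _ ≤ max 1 M := le_trans hx.2 (le_max_right _ _)
  have hbd : ∀ u ∈ Set.Icc (0:ℝ) 1, ‖x ^ u * Real.log x‖ ≤ max 1 M * L := by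
    intro u hu
    rw [norm_mul, Real.norm_eq_abs, Real.norm_eq_abs,
      abs_of_nonneg (Real.rpow_nonneg hx0.le u)]
    exact mul_le_mul (hpow u hu) hlog (abs_nonneg _)
      (le_trans zero_le_one (le_max_left _ _))
  have hder : ∀ u ∈ Set.Icc (0:ℝ) 1,
      HasDerivWithinAt (fun v : ℝ => x ^ v) (x ^ u * Real.log x) (Set.Icc (0:ℝ) 1) u := by
    intro u _
    have h := (Real.hasDerivAt_exp (u * Real.log x)).comp u
      (hasDerivAt_mul_const (Real.log x))
    have heq : (fun v : ℝ => x ^ v) = fun v : ℝ => Real.exp (v * Real.log x) := by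
      funext v
      rw [Real.rpow_def_of_pos hx0, mul_comm]
    have : HasDerivAt (fun v : ℝ => x ^ v) (Real.exp (u * Real.log x) * Real.log x) u := by
      rw [heq]; exact h
    have hval : Real.exp (u * Real.log x) = x ^ u := by
      rw [Real.rpow_def_of_pos hx0, mul_comm]
    rw [hval] at this
    exact this.hasDerivWithinAt
  have key := (convex_Icc (0:ℝ) 1).norm_image_sub_le_of_norm_hasDerivWithin_le
    hder hbd ht hs
  simpa [Real.norm_eq_abs] using key

end RealAux

namespace VarGMAux3
variable {A : Type*} [CStarAlgebra A] [PartialOrder A] [StarOrderedRing A]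
open VarGMAux VarGMAux2 Filter Topology

theorem posu_sa {a : A} (h : PosU a) : IsSelfAdjoint a := .of_nonneg h.1

/-- real-valued representative of `rpow` -/
theorem rpow_eq_cfc_real {a : A} (h : PosU a) (s : ℝ) :
    CFC.rpow a s = cfc (fun y : ℝ => ((y.toNNReal ^ s : ℝ≥0) : ℝ)) a := by
  have h1 : CFC.rpow a s = cfc (fun x : ℝ≥0 => x ^ s) a := rfl
  rw [h1]; exact cfc_nnreal_eq_real (fun x : ℝ≥0 => x ^ s) a h.1

theorem spectrum_bounds [Nontrivial A] {a : A} (h : PosU a) :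
    ∃ r > 0, ∀ x ∈ spectrum ℝ a, x ∈ Set.Icc r ‖a‖ := by
  obtain ⟨r, hr, hra⟩ : ∃ r > 0, algebraMap ℝ A r ≤ a := by
    rw [CFC.exists_pos_algebraMap_le_iff (posu_sa h)]
    intro x hx
    refine lt_of_le_of_ne (spectrum_nonneg_of_nonneg h.1 hx) ?_
    intro h0
    exact ((spectrum.zero_notMem_iff ℝ).mpr h.2) (h0 ▸ hx)
  refine ⟨r, hr, fun x hx => ⟨?_, ?_⟩⟩
  · exact (algebraMap_le_iff_le_spectrum (posu_sa h)).mp hra x hx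
  · exact le_trans (le_abs_self x) (spectrum.norm_le_norm_of_mem hx)

theorem rpow_tendsto [Nontrivial A] {a : A} (h : PosU a) {u : ℕ → ℝ} {p : ℝ}
    (hu : ∀ n, u n ∈ Set.Icc (0:ℝ) 1) (hp : p ∈ Set.Icc (0:ℝ) 1)
    (hlim : Tendsto u atTop (𝓝 p)) :
    Tendsto (fun n => CFC.rpow a (u n)) atTop (𝓝 (CFC.rpow a p)) := by
  obtain ⟨r, hr, hspec⟩ := spectrum_bounds h
  set K : ℝ := max 1 ‖a‖ * (|Real.log r| + |Real.log ‖a‖|) with hK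
  have hcont : ∀ s : ℝ, 0 ≤ s → Continuous (fun y : ℝ => ((y.toNNReal ^ s : ℝ≥0) : ℝ)) :=
    fun s hs => NNReal.continuous_coe.comp
      ((NNReal.continuous_rpow_const hs).comp continuous_real_toNNReal)
  rw [tendsto_iff_norm_sub_tendsto_zero]
  have hbound : ∀ n, ‖CFC.rpow a (u n) - CFC.rpow a p‖ ≤ K * |u n - p| := by
    intro n
    rw [rpow_eq_cfc_real h (u n), rpow_eq_cfc_real h p,
      ← cfc_sub _ _ a ((hcont _ (hu n).1).continuousOn) ((hcont _ hp.1).continuousOn)]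
    apply norm_cfc_le (by positivity)
    intro x hx
    have hxm := hspec x hx
    have hx0 : 0 ≤ x := le_trans hr.le hxm.1
    have hcoe : ∀ s : ℝ, ((x.toNNReal ^ s : ℝ≥0) : ℝ) = x ^ s := by
      intro s; rw [NNReal.coe_rpow, Real.coe_toNNReal x hx0]
    show ‖((x.toNNReal ^ (u n) : ℝ≥0) : ℝ) - ((x.toNNReal ^ p : ℝ≥0) : ℝ)‖ ≤ K * |u n - p|
    rw [hcoe, hcoe, Real.norm_eq_abs]
    exact rpow_lipschitz_aux hr hxm (hu n) hp
  apply squeeze_zero (fun n => norm_nonneg _) hbound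
  have htt : Tendsto (fun n => K * |u n - p|) atTop (𝓝 (K * |p - p|)) :=
    ((hlim.sub tendsto_const_nhds).abs).const_mul K
  simpa using htt

end VarGMAux3

namespace VarGMAux4
variable {A : Type*} [CStarAlgebra A] [PartialOrder A] [StarOrderedRing A]
open VarGMAux VarGMAux2 VarGMAux3 Filter Topology

theorem rpow_zero'' {a : A} (h : PosU a) : CFC.rpow a 0 = 1 := CFC.rpow_zero a h.1
theorem rpow_one' {a : A} (h : PosU a) : CFC.rpow a 1 = a := CFC.rpow_one a h.1

theorem gm_rpow_rpow {a : A} (h : PosU a) (p q : ℝ) :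
    gm (CFC.rpow a p) (CFC.rpow a q) = CFC.rpow a ((p + q) / 2) := by
  unfold gm
  rw [inverse_rpow h q, sqrt_rpow'' h (-q), sqrt_rpow'' h q,
    rpow_add' h (-q/2) p, rpow_add' h (-q/2 + p) (-q/2), sqrt_rpow'' h,
    rpow_add' h (q/2), rpow_add' h]
  congr 1
  ring

/-- operator monotonicity of `rpow · p` -/
def Mono (A : Type*) [CStarAlgebra A] [PartialOrder A] [StarOrderedRing A] (p : ℝ) : Prop :=
  ∀ ⦃a b : A⦄, PosU a → PosU b → a ≤ b → CFC.rpow a p ≤ CFC.rpow b p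

/-- operator Jensen inequality of `rpow · p` -/
def Jen (A : Type*) [CStarAlgebra A] [PartialOrder A] [StarOrderedRing A] (p : ℝ) : Prop :=
  ∀ (n : ℕ) (T C : Fin (n+1) → A), (∀ i, IsUnit (T i)) → (∀ i, PosU (C i)) →
    (∑ i, star (T i) * T i) ≤ 1 →
    ∑ i, star (T i) * CFC.rpow (C i) p * T i ≤ CFC.rpow (∑ i, star (T i) * C i * T i) p

theorem posu_sum_conj {n : ℕ} {T C : Fin (n+1) → A} (hT : ∀ i, IsUnit (T i))
    (hC : ∀ i, PosU (C i)) : PosU (∑ i, star (T i) * C i * T i) :=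
  posu_sum fun i => posu_conj (hC i) (hT i)

theorem mono_zero : Mono A 0 := by
  intro a b ha hb _
  rw [rpow_zero'' ha, rpow_zero'' hb]

theorem jen_zero : Jen A 0 := by
  intro n T C hT hC h1
  have e : ∀ i : Fin (n+1), star (T i) * CFC.rpow (C i) 0 * T i = star (T i) * T i := by
    intro i; rw [rpow_zero'' (hC i), mul_one]
  rw [Finset.sum_congr rfl (fun i _ => e i), rpow_zero'' (posu_sum_conj hT hC)]
  exact h1

theorem mono_one : Mono A 1 := by
  intro a b ha hb hab
  rwa [rpow_one' ha, rpow_one' hb]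

theorem jen_one : Jen A 1 := by
  intro n T C hT hC h1
  have e : ∀ i : Fin (n+1), star (T i) * CFC.rpow (C i) 1 * T i
      = star (T i) * C i * T i := by
    intro i; rw [rpow_one' (hC i)]
  rw [Finset.sum_congr rfl (fun i _ => e i), rpow_one' (posu_sum_conj hT hC)]

theorem mono_jen_mid [Nontrivial A] {p q : ℝ} (hp : Mono A p ∧ Jen A p)
    (hq : Mono A q ∧ Jen A q) : Mono A ((p + q)/2) ∧ Jen A ((p + q)/2) := by
  constructor
  · intro a b ha hb hab
    rw [← gm_rpow_rpow ha, ← gm_rpow_rpow hb]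
    exact gm_mono CFC.rpow_nonneg (posu_rpow ha q) (posu_rpow hb p) (posu_rpow hb q)
      (hp.1 ha hb hab) (hq.1 ha hb hab)
  · intro n T C hT hC h1
    have e : ∀ i : Fin (n+1), star (T i) * CFC.rpow (C i) ((p+q)/2) * T i
        = star (T i) * gm (CFC.rpow (C i) p) (CFC.rpow (C i) q) * T i := by
      intro i; rw [gm_rpow_rpow (hC i)]
    rw [Finset.sum_congr rfl fun i _ => e i, ← gm_rpow_rpow (posu_sum_conj hT hC)]
    calc ∑ i, star (T i) * gm (CFC.rpow (C i) p) (CFC.rpow (C i) q) * T i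
        ≤ gm (∑ i, star (T i) * CFC.rpow (C i) p * T i)
            (∑ i, star (T i) * CFC.rpow (C i) q * T i) :=
          gm_jensen T hT _ _ (fun i => posu_rpow (hC i) p) (fun i => posu_rpow (hC i) q)
      _ ≤ gm (CFC.rpow (∑ i, star (T i) * C i * T i) p)
            (CFC.rpow (∑ i, star (T i) * C i * T i) q) := by
          refine gm_mono ?_ ?_ ?_ ?_ ?_ ?_
          · exact Finset.sum_nonneg fun i _ => star_left_conjugate_nonneg CFC.rpow_nonneg _
          · exact posu_sum_conj hT fun i => posu_rpow (hC i) q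
          · exact posu_rpow (posu_sum_conj hT hC) p
          · exact posu_rpow (posu_sum_conj hT hC) q
          · exact hp.2 n T C hT hC h1
          · exact hq.2 n T C hT hC h1

theorem mono_jen_dyadic [Nontrivial A] :
    ∀ n k : ℕ, k ≤ 2^n → Mono A ((k : ℝ)/2^n) ∧ Jen A ((k : ℝ)/2^n) := by
  intro n
  induction n with
  | zero =>
    intro k hk
    interval_cases k
    · simpa using ⟨mono_zero, jen_zero⟩
    · simpa using ⟨mono_one, jen_one⟩
  | succ n ih =>
    intro k hk
    have h2 : (2:ℕ)^(n+1) = 2 * 2^n := by ring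
    set k₁ := k / 2 with hk₁
    set k₂ := k - k / 2 with hk₂
    have hk₁le : k₁ ≤ 2^n := by omega
    have hk₂le : k₂ ≤ 2^n := by omega
    have hsum : k₁ + k₂ = k := by omega
    have he : (k : ℝ)/2^(n+1) = (((k₁ : ℝ)/2^n) + ((k₂ : ℝ)/2^n))/2 := by
      rw [← hsum]
      push_cast
      ring
    rw [he]
    exact mono_jen_mid (ih k₁ hk₁le) (ih k₂ hk₂le)

theorem mono_jen_all [Nontrivial A] {p : ℝ} (hp0 : 0 ≤ p) (hp1 : p ≤ 1) :
    Mono A p ∧ Jen A p := by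
  set u : ℕ → ℝ := fun n => (⌊p * 2^n⌋₊ : ℝ) / 2^n with hu
  have hfl : ∀ n : ℕ, (⌊p * 2^n⌋₊ : ℕ) ≤ 2^n := by
    intro n
    have : p * 2^n ≤ ((2^n : ℕ) : ℝ) := by
      push_cast
      nlinarith [pow_pos (show (0:ℝ) < 2 by norm_num) n]
    calc ⌊p * 2^n⌋₊ ≤ ⌊((2^n : ℕ) : ℝ)⌋₊ := Nat.floor_le_floor this
      _ = 2^n := Nat.floor_natCast _
  have hun : ∀ n, Mono A (u n) ∧ Jen A (u n) := fun n => mono_jen_dyadic n _ (hfl n)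
  have hu01 : ∀ n, u n ∈ Set.Icc (0:ℝ) 1 := by
    intro n
    constructor
    · positivity
    · rw [div_le_one (by positivity)]
      calc ((⌊p * 2^n⌋₊ : ℕ) : ℝ) ≤ ((2^n : ℕ) : ℝ) := by exact_mod_cast hfl n
        _ = 2^n := by push_cast; ring
  have hlim : Tendsto u atTop (𝓝 p) := by
    have hple : ∀ n, p - (1/2)^n ≤ u n ∧ u n ≤ p := by
      intro n
      have h2n : (0:ℝ) < 2^n := by positivity
      constructor
      · rw [hu]
        rw [sub_le_iff_le_add, div_add' _ _ _ (ne_of_gt h2n)]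
        rw [le_div_iff₀ h2n]
        have := Nat.lt_floor_add_one (p * 2^n)
        have he : (1/2:ℝ)^n * 2^n = 1 := by
          rw [← mul_pow]; norm_num
        nlinarith [this]
      · rw [hu, div_le_iff₀ h2n]
        exact Nat.floor_le (by positivity)
    have h1 : Tendsto (fun n : ℕ => p - (1/2:ℝ)^n) atTop (𝓝 (p - 0)) :=
      tendsto_const_nhds.sub (tendsto_pow_atTop_nhds_zero_of_lt_one (by norm_num) (by norm_num))
    rw [show p = p - 0 by ring] 
    exact tendsto_of_tendsto_of_tendsto_of_le_of_le h1
      (by rw [show p - 0 = p by ring]; exact tendsto_const_nhds)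
      (fun n => (hple n).1) (fun n => (hple n).2)
  constructor
  · intro a b ha hb hab
    have hstep : ∀ n, (0:A) ≤ CFC.rpow b (u n) - CFC.rpow a (u n) :=
      fun n => sub_nonneg.mpr ((hun n).1 ha hb hab)
    have htt : Tendsto (fun n => CFC.rpow b (u n) - CFC.rpow a (u n)) atTop
        (𝓝 (CFC.rpow b p - CFC.rpow a p)) :=
      (rpow_tendsto hb hu01 ⟨hp0, hp1⟩ hlim).sub (rpow_tendsto ha hu01 ⟨hp0, hp1⟩ hlim)
    have := CStarAlgebra.isClosed_nonneg (A := A) |>.mem_of_tendsto htt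
      (Filter.Eventually.of_forall hstep)
    exact sub_nonneg.mp this
  · intro n T C hT hC h1
    have hS := posu_sum_conj hT hC
    have hstep : ∀ m, (0:A) ≤ CFC.rpow (∑ i, star (T i) * C i * T i) (u m)
        - ∑ i, star (T i) * CFC.rpow (C i) (u m) * T i :=
      fun m => sub_nonneg.mpr ((hun m).2 n T C hT hC h1)
    have htt : Tendsto (fun m => CFC.rpow (∑ i, star (T i) * C i * T i) (u m)
        - ∑ i, star (T i) * CFC.rpow (C i) (u m) * T i) atTop
        (𝓝 (CFC.rpow (∑ i, star (T i) * C i * T i) p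
          - ∑ i, star (T i) * CFC.rpow (C i) p * T i)) := by
      refine (rpow_tendsto hS hu01 ⟨hp0, hp1⟩ hlim).sub ?_
      refine tendsto_finset_sum _ fun i _ => ?_
      exact ((rpow_tendsto (hC i) hu01 ⟨hp0, hp1⟩ hlim).const_mul (star (T i))).mul_const (T i)
    have := CStarAlgebra.isClosed_nonneg (A := A) |>.mem_of_tendsto htt
      (Filter.Eventually.of_forall hstep)
    exact sub_nonneg.mp this

end VarGMAux4

namespace VarGMAux5
variable {A : Type*} [CStarAlgebra A] [PartialOrder A] [StarOrderedRing A]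
open VarGMAux VarGMAux2 VarGMAux3 VarGMAux4

/-- general C*-algebra version of `varGM` -/
noncomputable def varG : (k : ℕ) → (Fin (k + 1) → A) → A
  | 0, C => C 0
  | (k + 1), C =>
      CFC.sqrt (C (Fin.last (k + 1))) *
        varG k (fun i : Fin (k + 1) =>
          CFC.rpow
            (CFC.sqrt (Ring.inverse (C (Fin.last (k + 1)))) * C i.castSucc *
              CFC.sqrt (Ring.inverse (C (Fin.last (k + 1)))))
            ((k + 1 : ℝ) / (k + 2))) *
        CFC.sqrt (C (Fin.last (k + 1)))

theorem cancel_mid {u v : A} (huv : u * v = 1) (x y : A) :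
    x * u * (v * y) = x * y := by
  rw [mul_assoc, ← mul_assoc u, huv, one_mul]

theorem hp0 (k : ℕ) : 0 ≤ ((k : ℝ) + 1) / ((k : ℝ) + 2) := by positivity
theorem hp1 (k : ℕ) : ((k : ℝ) + 1) / ((k : ℝ) + 2) ≤ 1 := by
  rw [div_le_one (by positivity)]; linarith

theorem varG_master [Nontrivial A] (k : ℕ) :
    (∀ C C' : Fin (k+1) → A, (∀ i, PosU (C i)) → (∀ i, PosU (C' i)) →
      (∀ i, C i ≤ C' i) → varG k C ≤ varG k C')
    ∧ (∀ (n : ℕ) (T : Fin (n+1) → A) (C : Fin (n+1) → Fin (k+1) → A),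
        (∀ j, IsUnit (T j)) → (∀ j i, PosU (C j i)) → (∑ j, star (T j) * T j) ≤ 1 →
        ∑ j, star (T j) * varG k (C j) * T j
          ≤ varG k (fun i => ∑ j, star (T j) * C j i * T j)) := by
  induction k with
  | zero =>
    constructor
    · intro C C' _ _ h
      exact h 0
    · intro n T C _ _ _
      exact le_of_eq rfl
  | succ k ih =>
    obtain ⟨Mk, Jk⟩ := ih
    set p : ℝ := ((k : ℝ) + 1) / ((k : ℝ) + 2) with hpdef
    have hrpow_mono : Mono A p := (mono_jen_all (hp0 k) (hp1 k)).1
    have hrpow_jen : Jen A p := (mono_jen_all (hp0 k) (hp1 k)).2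
    have hvar : ∀ C : Fin (k+2) → A, varG (k+1) C
        = CFC.sqrt (C (Fin.last (k+1))) *
          varG k (fun i : Fin (k+1) =>
            CFC.rpow (CFC.sqrt (Ring.inverse (C (Fin.last (k+1)))) * C i.castSucc *
              CFC.sqrt (Ring.inverse (C (Fin.last (k+1))))) p) *
          CFC.sqrt (C (Fin.last (k+1))) := by
      intro C
      rfl
    -- auxiliary: single-step monotonicity in the last variable
    have lastmono : ∀ C : Fin (k+2) → A, ∀ B' : A, (∀ i, PosU (C i)) → PosU B' →
        C (Fin.last (k+1)) ≤ B' →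
        varG (k+1) C ≤ varG (k+1) (Function.update C (Fin.last (k+1)) B') := by
      intro C B' hC hB' hle
      set B := C (Fin.last (k+1)) with hBdef
      have hB : PosU B := hC _
      set sb := CFC.sqrt B with hsb
      set sbi := CFC.sqrt (Ring.inverse B) with hsbi
      set sb' := CFC.sqrt B' with hsb'
      set sbi' := CFC.sqrt (Ring.inverse B') with hsbi'
      have hsbP : PosU sb := posu_sqrt hB
      have hsbiP : PosU sbi := posu_sqrt (posu_inverse hB)
      have hsb'P : PosU sb' := posu_sqrt hB'
      have hsbi'P : PosU sbi' := posu_sqrt (posu_inverse hB')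
      have c1 : sb * sbi = 1 := sqrt_mul_sqrt_inverse hB
      have c2 : sbi * sb = 1 := sqrt_inverse_mul_sqrt hB
      have c3 : sb' * sbi' = 1 := sqrt_mul_sqrt_inverse hB'
      have c4 : sbi' * sb' = 1 := sqrt_inverse_mul_sqrt hB'
      set T := sb * sbi' with hT
      have hTu : IsUnit T := hsbP.2.mul hsbi'P.2
      have hTstar : star T = sbi' * sb := by
        rw [hT, star_mul, (IsSelfAdjoint.of_nonneg hsbP.1).star_eq,
          (IsSelfAdjoint.of_nonneg hsbi'P.1).star_eq]
      have hT1 : star T * T ≤ 1 := by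
        rw [hTstar, hT]
        have e1 : sbi' * sb * (sb * sbi') = sbi' * (sb * sb) * sbi' := by noncomm_ring
        rw [e1, CFC.sqrt_mul_sqrt_self B hB.1]
        calc sbi' * B * sbi' ≤ sbi' * B' * sbi' := by
              have := star_left_conjugate_le_conjugate hle sbi'
              rwa [(IsSelfAdjoint.of_nonneg hsbi'P.1).star_eq] at this
          _ = 1 := by
            rw [← CFC.sqrt_mul_sqrt_self B' hB'.1]
            have e2 : sbi' * (sb' * sb') * sbi' = (sbi' * sb') * (sb' * sbi') := by
              noncomm_ring
            rw [e2, c4, c3, one_mul]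
      set D : Fin (k+1) → A := fun i => sbi * C i.castSucc * sbi with hD
      have hDP : ∀ i, PosU (D i) := by
        intro i
        have := posu_conj (hC i.castSucc) hsbiP.2
        rwa [(IsSelfAdjoint.of_nonneg hsbiP.1).star_eq] at this
      have hkey : ∀ i : Fin (k+1), sbi' * C i.castSucc * sbi' = star T * D i * T := by
        intro i
        rw [hTstar, hT, hD]
        have : sbi' * sb * (sbi * C i.castSucc * sbi) * (sb * sbi')
            = sbi' * ((sb * sbi) * C i.castSucc * (sbi * sb)) * sbi' := by noncomm_ring
        rw [this, c1, c2, one_mul, mul_one]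
      -- single-element Jensen for rpow and for varG k
      have hsingle_rpow : ∀ x : A, PosU x →
          star T * CFC.rpow x p * T ≤ CFC.rpow (star T * x * T) p := by
        intro x hx
        have := hrpow_jen 0 (fun _ => T) (fun _ => x) (fun _ => hTu) (fun _ => hx)
          (by simpa using hT1)
        simpa using this
      have hsingle_var : ∀ X : Fin (k+1) → A, (∀ i, PosU (X i)) →
          star T * varG k X * T ≤ varG k (fun i => star T * X i * T) := by
        intro X hX
        have := Jk 0 (fun _ => T) (fun _ => X) (fun _ => hTu) (fun _ _ => hX _)
          (by simpa using hT1)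
        simpa using this
      -- main chain
      rw [hvar, hvar]
      have hupd_last : Function.update C (Fin.last (k+1)) B' (Fin.last (k+1)) = B' := by
        simp
      have hupd_cast : ∀ i : Fin (k+1),
          Function.update C (Fin.last (k+1)) B' i.castSucc = C i.castSucc := by
        intro i
        apply Function.update_of_ne
        exact Fin.ne_of_lt (Fin.castSucc_lt_last i)
      simp only [hupd_last, hupd_cast]
      calc sb * varG k (fun i => CFC.rpow (D i) p) * sb
          = sb' * (star T * varG k (fun i => CFC.rpow (D i) p) * T) * sb' := by
            rw [hTstar, hT]
            have hTs : sb' * (sbi' * sb) = sb := by rw [← mul_assoc, c3, one_mul]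
            have hTs2 : sb * sbi' * sb' = sb := by rw [mul_assoc, c4, mul_one]
            have e : sb' * (sbi' * sb * varG k (fun i => CFC.rpow (D i) p) * (sb * sbi')) * sb'
                = (sb' * (sbi' * sb)) * varG k (fun i => CFC.rpow (D i) p)
                  * (sb * sbi' * sb') := by noncomm_ring
            rw [e, hTs, hTs2]
        _ ≤ sb' * varG k (fun i => star T * CFC.rpow (D i) p * T) * sb' := by
            have h := hsingle_var (fun i => CFC.rpow (D i) p) (fun i => posu_rpow (hDP i) p)
            have := star_left_conjugate_le_conjugate h sb'
            rwa [(IsSelfAdjoint.of_nonneg hsb'P.1).star_eq] at this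
        _ ≤ sb' * varG k (fun i => CFC.rpow (star T * D i * T) p) * sb' := by
            have h := Mk (fun i => star T * CFC.rpow (D i) p * T)
              (fun i => CFC.rpow (star T * D i * T) p)
              (fun i => by
                have := posu_conj (posu_rpow (hDP i) p) hTu
                exact this)
              (fun i => posu_rpow (posu_conj (hDP i) hTu) p)
              (fun i => hsingle_rpow (D i) (hDP i))
            have := star_left_conjugate_le_conjugate h sb'
            rwa [(IsSelfAdjoint.of_nonneg hsb'P.1).star_eq] at this
        _ = sb' * varG k (fun i => CFC.rpow (sbi' * C i.castSucc * sbi') p) * sb' := by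
            have he : (fun i : Fin (k+1) => CFC.rpow (star T * D i * T) p)
                = fun i : Fin (k+1) => CFC.rpow (sbi' * C i.castSucc * sbi') p := by
              funext i
              rw [hkey i]
            rw [he]
    constructor
    · -- monotonicity
      intro C C' hC hC' hle
      set B := C (Fin.last (k+1)) with hBdef
      have hB : PosU B := hC _
      set C'' := Function.update C' (Fin.last (k+1)) B with hC''def
      have hC'' : ∀ i, PosU (C'' i) := by
        intro i
        by_cases hi : i = Fin.last (k+1)
        · rw [hi, hC''def, Function.update_self]; exact hB
        · rw [hC''def, Function.update_of_ne hi]; exact hC' i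
      have stepA : varG (k+1) C ≤ varG (k+1) C'' := by
        rw [hvar, hvar]
        have hlast'' : C'' (Fin.last (k+1)) = B := Function.update_self _ _ _
        simp only [hlast'']
        set sb := CFC.sqrt B
        set sbi := CFC.sqrt (Ring.inverse B)
        have hsbiP : PosU sbi := posu_sqrt (posu_inverse hB)
        have hinner : varG k (fun i => CFC.rpow (sbi * C i.castSucc * sbi) p)
            ≤ varG k (fun i => CFC.rpow (sbi * C'' i.castSucc * sbi) p) := by
          apply Mk
          · intro i
            refine posu_rpow ?_ p
            have := posu_conj (hC i.castSucc) hsbiP.2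
            rwa [(IsSelfAdjoint.of_nonneg hsbiP.1).star_eq] at this
          · intro i
            refine posu_rpow ?_ p
            have := posu_conj (hC'' i.castSucc) hsbiP.2
            rwa [(IsSelfAdjoint.of_nonneg hsbiP.1).star_eq] at this
          · intro i
            apply hrpow_mono
            · have := posu_conj (hC i.castSucc) hsbiP.2
              rwa [(IsSelfAdjoint.of_nonneg hsbiP.1).star_eq] at this
            · have := posu_conj (hC'' i.castSucc) hsbiP.2
              rwa [(IsSelfAdjoint.of_nonneg hsbiP.1).star_eq] at this
            · have h' : C i.castSucc ≤ C'' i.castSucc := by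
                rw [hC''def, Function.update_of_ne (Fin.ne_of_lt (Fin.castSucc_lt_last i))]
                exact hle i.castSucc
              have := star_left_conjugate_le_conjugate h' sbi
              rwa [(IsSelfAdjoint.of_nonneg hsbiP.1).star_eq] at this
        have := star_left_conjugate_le_conjugate hinner sb
        rwa [(IsSelfAdjoint.of_nonneg (posu_sqrt hB).1).star_eq] at this
      have stepB : varG (k+1) C'' ≤ varG (k+1) C' := by
        have h := lastmono C'' (C' (Fin.last (k+1))) hC'' (hC' _) (by
          rw [hC''def, Function.update_self]
          exact hle _)
        have he : Function.update C'' (Fin.last (k+1)) (C' (Fin.last (k+1))) = C' := by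
          rw [hC''def, Function.update_idem, Function.update_eq_self]
        rwa [he] at h
      exact stepA.trans stepB
    · -- Jensen
      intro n T C hT hC h1
      set Bsum := ∑ j, star (T j) * C j (Fin.last (k+1)) * T j with hBsum
      have hBP : PosU Bsum := posu_sum_conj hT (fun j => hC j _)
      set sB := CFC.sqrt Bsum with hsB
      set sBi := CFC.sqrt (Ring.inverse Bsum) with hsBi
      have hsBP : PosU sB := posu_sqrt hBP
      have hsBiP : PosU sBi := posu_sqrt (posu_inverse hBP)
      have cB1 : sB * sBi = 1 := sqrt_mul_sqrt_inverse hBP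
      have cB2 : sBi * sB = 1 := sqrt_inverse_mul_sqrt hBP
      set S : Fin (n+1) → A := fun j => CFC.sqrt (C j (Fin.last (k+1))) * T j * sBi
        with hSdef
      have hsbj : ∀ j, PosU (CFC.sqrt (C j (Fin.last (k+1)))) :=
        fun j => posu_sqrt (hC j _)
      have hsbij : ∀ j, PosU (CFC.sqrt (Ring.inverse (C j (Fin.last (k+1))))) :=
        fun j => posu_sqrt (posu_inverse (hC j _))
      have cj1 : ∀ j, CFC.sqrt (C j (Fin.last (k+1)))
          * CFC.sqrt (Ring.inverse (C j (Fin.last (k+1)))) = 1 :=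
        fun j => sqrt_mul_sqrt_inverse (hC j _)
      have cj2 : ∀ j, CFC.sqrt (Ring.inverse (C j (Fin.last (k+1))))
          * CFC.sqrt (C j (Fin.last (k+1))) = 1 :=
        fun j => sqrt_inverse_mul_sqrt (hC j _)
      have hSu : ∀ j, IsUnit (S j) := fun j => ((hsbj j).2.mul (hT j)).mul hsBiP.2
      have hSstar : ∀ j, star (S j)
          = sBi * (star (T j) * CFC.sqrt (C j (Fin.last (k+1)))) := by
        intro j
        rw [hSdef]
        simp only [star_mul, (IsSelfAdjoint.of_nonneg hsBiP.1).star_eq,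
          (IsSelfAdjoint.of_nonneg (hsbj j).1).star_eq]
        try noncomm_ring
      have hSS : ∀ j, star (S j) * S j
          = sBi * (star (T j) * C j (Fin.last (k+1)) * T j) * sBi := by
        intro j
        rw [hSstar j, hSdef]
        have e : sBi * (star (T j) * CFC.sqrt (C j (Fin.last (k+1))))
              * (CFC.sqrt (C j (Fin.last (k+1))) * T j * sBi)
            = sBi * (star (T j) * (CFC.sqrt (C j (Fin.last (k+1)))
              * CFC.sqrt (C j (Fin.last (k+1)))) * T j) * sBi := by noncomm_ring
        rw [e, CFC.sqrt_mul_sqrt_self _ (hC j _).1]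
      have hS1 : ∑ j, star (S j) * S j ≤ 1 := by
        have e : ∑ j, star (S j) * S j = sBi * Bsum * sBi := by
          rw [Finset.sum_congr rfl fun j _ => hSS j, hBsum]
          simp only [Finset.mul_sum, Finset.sum_mul]
        rw [e, ← CFC.sqrt_mul_sqrt_self Bsum hBP.1]
        have e2 : sBi * (sB * sB) * sBi = (sBi * sB) * (sB * sBi) := by noncomm_ring
        rw [e2, cB1, cB2, one_mul]
      set D : Fin (n+1) → Fin (k+1) → A := fun j i =>
        CFC.sqrt (Ring.inverse (C j (Fin.last (k+1)))) * C j i.castSucc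
          * CFC.sqrt (Ring.inverse (C j (Fin.last (k+1)))) with hDdef
      have hDP : ∀ j i, PosU (D j i) := by
        intro j i
        have := posu_conj (hC j i.castSucc) (hsbij j).2
        rwa [(IsSelfAdjoint.of_nonneg (hsbij j).1).star_eq] at this
      have hkey : ∀ i : Fin (k+1),
          sBi * (∑ j, star (T j) * C j i.castSucc * T j) * sBi
            = ∑ j, star (S j) * D j i * S j := by
        intro i
        rw [Finset.sum_congr rfl (fun j (_ : j ∈ Finset.univ) => show
          star (S j) * D j i * S j = sBi * (star (T j) * C j i.castSucc * T j) * sBi by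
          rw [hSstar j, hSdef, hDdef]
          have e : sBi * (star (T j) * CFC.sqrt (C j (Fin.last (k+1))))
                * (CFC.sqrt (Ring.inverse (C j (Fin.last (k+1)))) * C j i.castSucc
                  * CFC.sqrt (Ring.inverse (C j (Fin.last (k+1)))))
                * (CFC.sqrt (C j (Fin.last (k+1))) * T j * sBi)
              = sBi * (star (T j) * ((CFC.sqrt (C j (Fin.last (k+1)))
                  * CFC.sqrt (Ring.inverse (C j (Fin.last (k+1))))) * C j i.castSucc
                  * (CFC.sqrt (Ring.inverse (C j (Fin.last (k+1))))
                    * CFC.sqrt (C j (Fin.last (k+1))))) * T j) * sBi := by noncomm_ring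
          rw [e, cj1 j, cj2 j, one_mul, mul_one])]
        simp only [Finset.mul_sum, Finset.sum_mul]
      -- the chain
      have hrhs : varG (k+1) (fun i => ∑ j, star (T j) * C j i * T j)
          = sB * varG k (fun i => CFC.rpow (∑ j, star (S j) * D j i * S j) p) * sB := by
        rw [hvar]
        have he : (fun i : Fin (k+1) => CFC.rpow
            (CFC.sqrt (Ring.inverse (∑ j, star (T j) * C j (Fin.last (k+1)) * T j))
              * (∑ j, star (T j) * C j i.castSucc * T j)
              * CFC.sqrt (Ring.inverse (∑ j, star (T j) * C j (Fin.last (k+1)) * T j))) p)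
            = fun i : Fin (k+1) => CFC.rpow (∑ j, star (S j) * D j i * S j) p := by
          funext i
          rw [← hkey i]
        rw [he]
      rw [hrhs]
      calc ∑ j, star (T j) * varG (k+1) (C j) * T j
          = ∑ j, sB * (star (S j) * varG k (fun i => CFC.rpow (D j i) p) * S j) * sB := by
            refine Finset.sum_congr rfl fun j _ => ?_
            rw [hvar (C j), hSstar j, hSdef]
            set Vj := varG k (fun i => CFC.rpow (D j i) p) with hVj
            have e : sB * (sBi * (star (T j) * CFC.sqrt (C j (Fin.last (k+1)))) * Vj
                  * (CFC.sqrt (C j (Fin.last (k+1))) * T j * sBi)) * sB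
                = (sB * sBi) * (star (T j) * (CFC.sqrt (C j (Fin.last (k+1))) * Vj
                  * CFC.sqrt (C j (Fin.last (k+1)))) * T j) * (sBi * sB) := by noncomm_ring
            rw [e, cB1, cB2, one_mul, mul_one]
        _ = sB * (∑ j, star (S j) * varG k (fun i => CFC.rpow (D j i) p) * S j) * sB := by
            simp only [Finset.mul_sum, Finset.sum_mul]
        _ ≤ sB * varG k (fun i => ∑ j, star (S j) * CFC.rpow (D j i) p * S j) * sB := by
            have h := Jk n S (fun j i => CFC.rpow (D j i) p) hSu
              (fun j i => posu_rpow (hDP j i) p) hS1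
            have := star_left_conjugate_le_conjugate h sB
            rwa [(IsSelfAdjoint.of_nonneg hsBP.1).star_eq] at this
        _ ≤ sB * varG k (fun i => CFC.rpow (∑ j, star (S j) * D j i * S j) p) * sB := by
            have h := Mk (fun i => ∑ j, star (S j) * CFC.rpow (D j i) p * S j)
              (fun i => CFC.rpow (∑ j, star (S j) * D j i * S j) p)
              (fun i => posu_sum_conj hSu (fun j => posu_rpow (hDP j i) p))
              (fun i => posu_rpow (posu_sum_conj hSu fun j => hDP j i) p)
              (fun i => hrpow_jen n S (fun j => D j i) hSu (fun j => hDP j i) hS1)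
            have := star_left_conjugate_le_conjugate h sB
            rwa [(IsSelfAdjoint.of_nonneg hsBP.1).star_eq] at this

end VarGMAux5

end

noncomputable section

variable {H : Type*} [NormedAddCommGroup H] [InnerProductSpace ℂ H] [CompleteSpace H]

theorem varGM_eq_varG : ∀ (k : ℕ) (C : Fin (k+1) → (H →L[ℂ] H)),
    varGM k C = VarGMAux5.varG k C
  | 0, C => rfl
  | (k+1), C => by
      simp only [varGM, VarGMAux5.varG, varGM_eq_varG k]

/-- **Concavity of the variant geometric mean.** For every `k ≥ 1`, the variant geometric
mean is concave in the Loewner order. -/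
theorem varGM_concave
    (hH : ¬ FiniteDimensional ℂ H) (k : ℕ)
    (A B : Fin (k + 1) → (H →L[ℂ] H))
    (hA : ∀ i, IsPosDefInv (A i)) (hB : ∀ i, IsPosDefInv (B i))
    (t : ℝ) (ht0 : 0 ≤ t) (ht1 : t ≤ 1) :
    t • varGM k A + (1 - t) • varGM k B ≤ varGM k (fun i => t • A i + (1 - t) • B i) := by
  haveI hntH : Nontrivial H := by
    by_contra hcon
    rw [not_nontrivial_iff_subsingleton] at hcon
    exact hH inferInstance
  haveI : Nontrivial (H →L[ℂ] H) := by
    obtain ⟨x, hx⟩ := exists_ne (0 : H)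
    refine ⟨1, 0, fun hc => hx ?_⟩
    calc x = (1 : H →L[ℂ] H) x := rfl
      _ = (0 : H →L[ℂ] H) x := by rw [hc]
      _ = 0 := rfl
  rcases eq_or_lt_of_le ht0 with h0 | h0
  · rw [← h0]
    simp only [zero_smul, sub_zero, one_smul, zero_add]
    exact le_rfl
  rcases eq_or_lt_of_le ht1 with h1 | h1
  · rw [h1]
    simp only [one_smul, sub_self, zero_smul, add_zero]
    exact le_rfl
  · -- main case : 0 < t < 1
    have ht2 : 0 < 1 - t := by linarith
    set r1 : ℝ := Real.sqrt t with hr1def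
    set r2 : ℝ := Real.sqrt (1 - t) with hr2def
    have hr1 : r1 * r1 = t := Real.mul_self_sqrt ht0
    have hr2 : r2 * r2 = 1 - t := Real.mul_self_sqrt (by linarith)
    have hr1ne : r1 ≠ 0 := by
      rw [hr1def]; exact ne_of_gt (Real.sqrt_pos.mpr h0)
    have hr2ne : r2 ≠ 0 := by
      rw [hr2def]; exact ne_of_gt (Real.sqrt_pos.mpr ht2)
    set T : Fin 2 → (H →L[ℂ] H) := ![r1 • 1, r2 • 1] with hTdef
    set C : Fin 2 → Fin (k+1) → (H →L[ℂ] H) := ![A, B] with hCdef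
    have hsmul_unit : ∀ r : ℝ, r ≠ 0 → IsUnit (r • (1 : H →L[ℂ] H)) := by
      intro r hr
      refine ⟨⟨r • 1, r⁻¹ • 1, ?_, ?_⟩, rfl⟩
      · rw [smul_mul_smul_comm, mul_inv_cancel₀ hr, one_mul, one_smul]
      · rw [smul_mul_smul_comm, inv_mul_cancel₀ hr, one_mul, one_smul]
    have hT : ∀ j, IsUnit (T j) := by
      intro j
      fin_cases j
      · exact hsmul_unit r1 hr1ne
      · exact hsmul_unit r2 hr2ne
    have hC : ∀ j i, VarGMAux.PosU (C j i) := by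
      intro j i
      fin_cases j
      · exact ⟨(hA i).1, (hA i).2⟩
      · exact ⟨(hB i).1, (hB i).2⟩
    have hstar : ∀ r : ℝ, star (r • (1 : H →L[ℂ] H)) = r • 1 := by
      intro r
      rw [star_smul, star_trivial, star_one]
    have hconj : ∀ (r : ℝ) (X : H →L[ℂ] H),
        star (r • (1 : H →L[ℂ] H)) * X * (r • (1 : H →L[ℂ] H)) = (r * r) • X := by
      intro r X
      rw [hstar, smul_mul_assoc, one_mul, mul_smul_comm, mul_one, smul_smul]
    have hsum : ∑ j, star (T j) * T j ≤ 1 := by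
      rw [Fin.sum_univ_two]
      have e0 : star (T 0) * T 0 = t • 1 := by
        show star (r1 • (1 : H →L[ℂ] H)) * (r1 • 1) = t • 1
        rw [hstar, smul_mul_smul_comm, hr1, one_mul]
      have e1 : star (T 1) * T 1 = (1 - t) • 1 := by
        show star (r2 • (1 : H →L[ℂ] H)) * (r2 • 1) = (1 - t) • 1
        rw [hstar, smul_mul_smul_comm, hr2, one_mul]
      rw [e0, e1, ← add_smul]
      norm_num
    have master := (VarGMAux5.varG_master (A := H →L[ℂ] H) k).2 1 T C hT hC hsum
    have hLHS : ∑ j, star (T j) * VarGMAux5.varG k (C j) * T j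
        = t • varGM k A + (1 - t) • varGM k B := by
      rw [Fin.sum_univ_two]
      have e0 : star (T 0) * VarGMAux5.varG k (C 0) * T 0 = t • varGM k A := by
        show star (r1 • (1 : H →L[ℂ] H)) * VarGMAux5.varG k A * (r1 • 1) = t • varGM k A
        rw [hconj, hr1, varGM_eq_varG]
      have e1 : star (T 1) * VarGMAux5.varG k (C 1) * T 1 = (1 - t) • varGM k B := by
        show star (r2 • (1 : H →L[ℂ] H)) * VarGMAux5.varG k B * (r2 • 1)
          = (1 - t) • varGM k B
        rw [hconj, hr2, varGM_eq_varG]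
      rw [e0, e1]
    have hRHS : (fun i => ∑ j, star (T j) * C j i * T j)
        = fun i => t • A i + (1 - t) • B i := by
      funext i
      rw [Fin.sum_univ_two]
      have e0 : star (T 0) * C 0 i * T 0 = t • A i := by
        show star (r1 • (1 : H →L[ℂ] H)) * A i * (r1 • 1) = t • A i
        rw [hconj, hr1]
      have e1 : star (T 1) * C 1 i * T 1 = (1 - t) • B i := by
        show star (r2 • (1 : H →L[ℂ] H)) * B i * (r2 • 1) = (1 - t) • B i
        rw [hconj, hr2]
      rw [e0, e1]
    rw [hLHS, hRHS] at master
    exact master.trans_eq (varGM_eq_varG _ _).symm
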